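/- Let α, β, γ, δ > 0 and let G(x,y,θ,p,q,κ) be the 6×6 symmetric matrix of the left-invariant metric ds²_{G^J₁(ℝ)} = α(dx²+dy²)/y² + β(dx/y + 2dθ)² + (γ/y)[dq² + (x²+y²)dp² + 2x dp dq] + δ(dκ − p dq + q dp)² on {(x,y,θ,p,q,κ) ∈ ℝ⁶ : y > 0}. Define the six vector fields L¹ = (1/√α)(y cos 2θ, y sin 2θ, −(1/2)cos 2θ, 0, 0, 0), L² = (1/√α)(−y sin 2θ, y cos 2θ, (1/2)sin 2θ, 0, 0, 0), L³ = (0,0,1/(2√β),0,0,0), L⁴ = (1/(√γ·√y))·(0, 0, 0, cos θ, −(x cos θ + y sin θ), −[p(x cos θ + y sin θ) + q cos θ]), L⁵ = (1/(√γ·√y))·(0, 0, 0, sin θ, y cos θ − x sin θ, p(y cos θ − x sin θ) − q sin θ), L⁶ = (0,0,0,0,0,1/√δ). Then for all points with y > 0 and all i,j ∈ {1,…,6}: (Lⁱ)ᵀ · G · Lʲ = δ_{ij}, i.e. L¹,…,L⁶ form an orthonormal frame for the left-invariant metric on the real Jacobi group G^J₁(ℝ) in the S-coordinates (x,y,θ,p,q,κ).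 -/

import Mathlib

open Matrix

/-- The matrix of the four-parameter left-invariant metric
`ds² = α(dx²+dy²)/y² + β(dx/y+2dθ)² + (γ/y)[dq² + (x²+y²)dp² + 2x dp dq]
+ δ(dκ − p dq + q dp)²` on the real Jacobi group `G^J₁(ℝ)` in the S-coordinates
`(x,y,θ,p,q,κ)`. -/
noncomputable def gJ (α β γ δ x y p q : ℝ) : Matrix (Fin 6) (Fin 6) ℝ :=
  !![(α + β) / y ^ 2, 0, 2 * β / y, 0, 0, 0;
     0, α / y ^ 2, 0, 0, 0, 0;
     2 * β / y, 0, 4 * β, 0, 0, 0;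
     0, 0, 0, γ * (x ^ 2 + y ^ 2) / y + δ * q ^ 2,
       γ * x / y - δ * p * q, δ * q;
     0, 0, 0, γ * x / y - δ * p * q, γ / y + δ * p ^ 2, -(δ * p);
     0, 0, 0, δ * q, -(δ * p), δ]

/-- The left-invariant frame `L¹,…,L⁶` on `G^J₁(ℝ)` in the S-coordinates
`(x,y,θ,p,q,κ)`. -/
noncomputable def LframeJ (α β γ δ x y θ p q : ℝ) : Fin 6 → Fin 6 → ℝ :=
  ![![y * Real.cos (2 * θ) / Real.sqrt α, y * Real.sin (2 * θ) / Real.sqrt α,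
      -(1 / 2) * Real.cos (2 * θ) / Real.sqrt α, 0, 0, 0],
    ![-(y * Real.sin (2 * θ)) / Real.sqrt α, y * Real.cos (2 * θ) / Real.sqrt α,
      (1 / 2) * Real.sin (2 * θ) / Real.sqrt α, 0, 0, 0],
    ![0, 0, 1 / (2 * Real.sqrt β), 0, 0, 0],
    ![0, 0, 0, Real.cos θ / (Real.sqrt γ * Real.sqrt y),
      -(x * Real.cos θ + y * Real.sin θ) / (Real.sqrt γ * Real.sqrt y),
      -(p * (x * Real.cos θ + y * Real.sin θ) + q * Real.cos θ) /
        (Real.sqrt γ * Real.sqrt y)],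
    ![0, 0, 0, Real.sin θ / (Real.sqrt γ * Real.sqrt y),
      (y * Real.cos θ - x * Real.sin θ) / (Real.sqrt γ * Real.sqrt y),
      (p * (y * Real.cos θ - x * Real.sin θ) - q * Real.sin θ) /
        (Real.sqrt γ * Real.sqrt y)],
    ![0, 0, 0, 0, 0, 1 / Real.sqrt δ]]

theorem my_cons_val_five {α : Type*} {m : ℕ} (x : α) (u : Fin m.succ.succ.succ.succ.succ → α) :
    Matrix.vecCons x u 5 = u 4 := rfl

set_option maxHeartbeats 4000000 in
/-- The vector fields `L¹,…,L⁶` form an orthonormal frame for the four-parameter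
left-invariant metric on the real Jacobi group `G^J₁(ℝ)` in the S-coordinates. -/
theorem LframeJ_orthonormal (α β γ δ : ℝ)
    (hα : 0 < α) (hβ : 0 < β) (hγ : 0 < γ) (hδ : 0 < δ)
    (x y θ p q κ : ℝ) (hy : 0 < y) :
    ∀ i j : Fin 6,
      LframeJ α β γ δ x y θ p q i ⬝ᵥ
          (gJ α β γ δ x y p q *ᵥ LframeJ α β γ δ x y θ p q j) =
        if i = j then 1 else 0 := by
  obtain ⟨a, ha, rfl⟩ : ∃ a, 0 < a ∧ a ^ 2 = α := ⟨Real.sqrt α, Real.sqrt_pos.2 hα, Real.sq_sqrt hα.le⟩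
  obtain ⟨b, hb, rfl⟩ : ∃ b, 0 < b ∧ b ^ 2 = β := ⟨Real.sqrt β, Real.sqrt_pos.2 hβ, Real.sq_sqrt hβ.le⟩
  obtain ⟨c, hc, rfl⟩ : ∃ c, 0 < c ∧ c ^ 2 = γ := ⟨Real.sqrt γ, Real.sqrt_pos.2 hγ, Real.sq_sqrt hγ.le⟩
  obtain ⟨d, hd, rfl⟩ : ∃ d, 0 < d ∧ d ^ 2 = δ := ⟨Real.sqrt δ, Real.sqrt_pos.2 hδ, Real.sq_sqrt hδ.le⟩
  obtain ⟨w, hw, rfl⟩ : ∃ w, 0 < w ∧ w ^ 2 = y := ⟨Real.sqrt y, Real.sqrt_pos.2 hy, Real.sq_sqrt hy.le⟩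
  intro i j
  fin_cases i <;> fin_cases j <;>
    simp only [gJ, LframeJ, Matrix.mulVec, dotProduct, Fin.sum_univ_six,
      Real.sqrt_sq ha.le, Real.sqrt_sq hb.le, Real.sqrt_sq hc.le, Real.sqrt_sq hd.le,
      Real.sqrt_sq hw.le, Matrix.cons_val_zero, Matrix.cons_val_one, Matrix.head_cons,
      Matrix.cons_val_two, Matrix.tail_cons, Matrix.cons_val_three, Matrix.cons_val_four,
      my_cons_val_five, Matrix.cons_val', Matrix.cons_val_fin_one, Matrix.empty_val',
      Matrix.head_fin_const, Matrix.of_apply, Fin.mk.injEq, Fin.isValue] <;>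
    norm_num <;>
    first
      | tauto
      | (field_simp
         try ring_nf
         try simp only [Real.cos_sq']
         try ring_nf
         try ring
         try tauto)
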